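/- Up to the equivalence relation identifying a homotopy string θ with its reverse θ̄, every homotopy string in the quiver Q(n,m) (with relations α_{j−1}α_j cyclically among the cycle arrows α_0,…,α_{n−1}) is exactly one of: (a) a stationary path at a vertex; (b) α_u α_{u+1} ⋯ α_{u+l} for u ∈ [−m,n−1], l ∈ ℕ (indices of the α's ≥ 0 read modulo n); (c) α_u ⋯ α_{u+l} ᾱ_{−1} ⋯ ᾱ_v for u ∈ [−m,n−1], v ∈ [−m,−1], l ∈ ℕ with u+l ≥ 0 and u+l ≡ n−1 (mod n). -/

import Mathlib

/- The quiver `Q(n,m)` has vertices `[-m, n-1]` and arrows `α_u : t(u) → u`,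
`u ∈ [-m, n-1]`, where `t(u) = u + 1` for `u ∈ [-m, n-2]` and `t(n-1) = 0`,
bound by the relations `α_{n-1}α_0, α_{n-2}α_{n-1}, …, α_0α_1`.
A letter `(w, true)` denotes the direct arrow `α_w`, a letter `(w, false)` its
formal inverse `ᾱ_w`; a homotopy string is a composable word in the letters
avoiding subpaths `αᾱ`, `ᾱα` and the zero relations (and their inverses). -/

/-- The tail vertex of the arrow `α_u` in `Q(n,m)`. -/
def tailV (n u : ℤ) : ℤ := if u = n - 1 then 0 else u + 1

/-- The starting vertex of a letter (a path `β₁ β₂ ⋯` is composed like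
functions, so a letter's start must match the next letter's end). -/
def startL (n : ℤ) (ℓ : ℤ × Bool) : ℤ := if ℓ.2 then tailV n ℓ.1 else ℓ.1

/-- The ending vertex of a letter. -/
def endL (n : ℤ) (ℓ : ℤ × Bool) : ℤ := if ℓ.2 then ℓ.1 else tailV n ℓ.1

/-- Admissibility of two consecutive letters `ℓ₁ ℓ₂` in a homotopy string:
they are composable, are not mutually inverse, and do not form a zero relation
`α_j α_{(j+1) mod n}` (nor the inverse of one). -/
def adm (n : ℤ) (ℓ₁ ℓ₂ : ℤ × Bool) : Prop :=
  startL n ℓ₁ = endL n ℓ₂ ∧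
  ¬(ℓ₁.1 = ℓ₂.1 ∧ ℓ₁.2 ≠ ℓ₂.2) ∧
  ¬(ℓ₁.2 = true ∧ ℓ₂.2 = true ∧ 0 ≤ ℓ₁.1 ∧ 0 ≤ ℓ₂.1 ∧ (ℓ₁.1 + 1) % n = ℓ₂.1) ∧
  ¬(ℓ₁.2 = false ∧ ℓ₂.2 = false ∧ 0 ≤ ℓ₁.1 ∧ 0 ≤ ℓ₂.1 ∧ (ℓ₂.1 + 1) % n = ℓ₁.1)

/-- A homotopy string in `Q(n,m)`: all letters are arrows of the quiver and
consecutive letters are admissible. The empty list stands for a stationary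
path. -/
def IsHomotopyString (n m : ℤ) (θ : List (ℤ × Bool)) : Prop :=
  (∀ ℓ ∈ θ, -m ≤ ℓ.1 ∧ ℓ.1 ≤ n - 1) ∧ θ.Chain' (adm n)

/-- The reverse (formal inverse) `θ̄` of a homotopy string. -/
def revStr (θ : List (ℤ × Bool)) : List (ℤ × Bool) :=
  (θ.map fun ℓ => (ℓ.1, !ℓ.2)).reverse

/-- Index convention: for `w ≥ n`, `α_w` denotes `α_{w % n}`. -/
def idx (n w : ℤ) : ℤ := if w < 0 then w else w % n

/-- Form (b): the string `α_u α_{u+1} ⋯ α_{u+l}`. -/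
def formB (n u : ℤ) (l : ℕ) : List (ℤ × Bool) :=
  (List.range (l + 1)).map fun j => (idx n (u + j), true)

/-- Form (c): the string `α_u ⋯ α_{u+l} ᾱ_{-1} ᾱ_{-2} ⋯ ᾱ_v`. -/
def formC (n u : ℤ) (l : ℕ) (v : ℤ) : List (ℤ × Bool) :=
  formB n u l ++ ((List.range (-v).toNat).map fun j => (-1 - (j : ℤ), false))

/-- `θ` is, up to reversal, of the form (b) `α_u ⋯ α_{u+l}`, `u ∈ [-m,n-1]`. -/
def isFormB (n m : ℤ) (θ : List (ℤ × Bool)) : Prop :=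
  ∃ (u : ℤ) (l : ℕ), -m ≤ u ∧ u ≤ n - 1 ∧
    (θ = formB n u l ∨ θ = revStr (formB n u l))

/-- `θ` is, up to reversal, of the form (c) `α_u ⋯ α_{u+l} ᾱ_{-1} ⋯ ᾱ_v`,
`u ∈ [-m,n-1]`, `v ∈ [-m,-1]`, `u + l ≥ 0`, `u + l ≡ n - 1 (mod n)`. -/
def isFormC (n m : ℤ) (θ : List (ℤ × Bool)) : Prop :=
  ∃ (u v : ℤ) (l : ℕ), -m ≤ u ∧ u ≤ n - 1 ∧ -m ≤ v ∧ v ≤ -1 ∧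
    0 ≤ u + (l : ℤ) ∧ (u + (l : ℤ)) % n = (n - 1) % n ∧
    (θ = formC n u l v ∨ θ = revStr (formC n u l v))

/-- Auxiliary: an ascending run of direct letters. -/
def ascRun (a : ℤ) (k : ℕ) : List (ℤ × Bool) :=
  (List.range k).map fun (j : ℕ) => (a + (j : ℤ), true)

/-- Auxiliary: a descending run of inverse letters. -/
def descRun (b : ℤ) (r : ℕ) : List (ℤ × Bool) :=
  (List.range r).map fun (j : ℕ) => (b - (j : ℤ), false)

lemma formB_eq_map (n u : ℤ) (l : ℕ) :
    formB n u l = (List.range (l + 1)).map (fun (j : ℕ) => (idx n (u + (j : ℤ)), true)) := by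
  unfold formB
  simp only [List.pure_def, List.bind_eq_flatMap, ← List.map_eq_flatMap, List.map_map]
  rfl

lemma formC_eq_append (n u : ℤ) (l : ℕ) (v : ℤ) :
    formC n u l v = formB n u l ++ descRun (-1) (-v).toNat := by
  unfold formC descRun
  congr 1
  simp only [List.pure_def, List.bind_eq_flatMap, ← List.map_eq_flatMap, List.map_map]
  rfl

lemma ascRun_cons (a : ℤ) (k : ℕ) :
    ascRun a (k + 1) = (a, true) :: ascRun (a + 1) k := by
  unfold ascRun
  rw [List.range_succ_eq_map]
  simp only [List.map_cons, Nat.cast_zero, add_zero, List.map_map]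
  congr 1
  apply List.map_congr_left
  intro j _
  simp only [Function.comp_apply, Prod.mk.injEq, and_true]
  push_cast
  ring

lemma descRun_cons (b : ℤ) (r : ℕ) :
    descRun b (r + 1) = (b, false) :: descRun (b - 1) r := by
  unfold descRun
  rw [List.range_succ_eq_map]
  simp only [List.map_cons, Nat.cast_zero, sub_zero, List.map_map]
  congr 1
  apply List.map_congr_left
  intro j _
  simp only [Function.comp_apply, Prod.mk.injEq, and_true]
  push_cast
  ring

lemma ascRun_snoc (a : ℤ) (k : ℕ) :
    ascRun a (k + 1) = ascRun a k ++ [(a + (k : ℤ), true)] := by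
  unfold ascRun
  rw [List.range_succ, List.map_append]
  rfl

lemma descRun_snoc (b : ℤ) (r : ℕ) :
    descRun b (r + 1) = descRun b r ++ [(b - (r : ℤ), false)] := by
  unfold descRun
  rw [List.range_succ, List.map_append]
  rfl

lemma revStr_cons (ℓ : ℤ × Bool) (θ : List (ℤ × Bool)) :
    revStr (ℓ :: θ) = revStr θ ++ [(ℓ.1, !ℓ.2)] := by
  simp [revStr]

lemma revStr_ascRun (a : ℤ) (k : ℕ) :
    revStr (ascRun a k) = descRun (a + (k : ℤ) - 1) k := by
  induction k generalizing a with
  | zero => rfl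
  | succ k ih =>
    rw [ascRun_cons, revStr_cons, ih, descRun_snoc]
    have h1 : a + 1 + (k : ℤ) - 1 = a + ((k : ℕ) + 1 : ℕ) - 1 := by push_cast; ring
    have h2 : a + (((k : ℕ) + 1 : ℕ) : ℤ) - 1 - (k : ℤ) = a := by push_cast; ring
    rw [h1, h2]
    rfl

lemma revStr_descRun (b : ℤ) (r : ℕ) :
    revStr (descRun b r) = ascRun (b - (r : ℤ) + 1) r := by
  induction r generalizing b with
  | zero => rfl
  | succ r ih =>
    rw [descRun_cons, revStr_cons, ih, ascRun_snoc]
    have h1 : b - 1 - (r : ℤ) + 1 = b - (((r : ℕ) + 1 : ℕ) : ℤ) + 1 := by push_cast; ring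
    have h2 : b - (((r : ℕ) + 1 : ℕ) : ℤ) + 1 + (r : ℤ) = b := by push_cast; ring
    rw [h1, h2]
    rfl

lemma mem_ascRun {a : ℤ} {j k : ℕ} (h : j < k) : (a + (j : ℤ), true) ∈ ascRun a k := by
  unfold ascRun
  exact List.mem_map.mpr ⟨j, List.mem_range.mpr h, rfl⟩

lemma mem_descRun {b : ℤ} {j r : ℕ} (h : j < r) : (b - (j : ℤ), false) ∈ descRun b r := by
  unfold descRun
  exact List.mem_map.mpr ⟨j, List.mem_range.mpr h, rfl⟩

lemma snd_of_mem_ascRun {a : ℤ} {k : ℕ} {ℓ : ℤ × Bool} (h : ℓ ∈ ascRun a k) : ℓ.2 = true := by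
  unfold ascRun at h
  obtain ⟨j, -, rfl⟩ := List.mem_map.mp h
  rfl

lemma snd_of_mem_descRun {b : ℤ} {r : ℕ} {ℓ : ℤ × Bool} (h : ℓ ∈ descRun b r) : ℓ.2 = false := by
  unfold descRun at h
  obtain ⟨j, -, rfl⟩ := List.mem_map.mp h
  rfl

lemma idx_eq_self {n w : ℤ} (h : w < n) : idx n w = w := by
  unfold idx
  split
  · rfl
  · exact Int.emod_eq_of_lt (by omega) h

lemma formB_eq_ascRun {n u : ℤ} {l : ℕ} (h : ∀ j : ℕ, j < l + 1 → u + (j : ℤ) < n) :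
    formB n u l = ascRun u (l + 1) := by
  rw [formB_eq_map]
  unfold ascRun
  apply List.map_congr_left
  intro j hj
  rw [idx_eq_self (h j (List.mem_range.mp hj))]

lemma mem_revStr {θ : List (ℤ × Bool)} {x : ℤ} {s : Bool} :
    (x, s) ∈ revStr θ ↔ (x, !s) ∈ θ := by
  simp only [revStr, List.mem_reverse, List.mem_map]
  constructor
  · rintro ⟨⟨y, t⟩, hy, he⟩
    simp only [Prod.mk.injEq] at he
    obtain ⟨rfl, rfl⟩ := he
    simpa using hy
  · intro h
    exact ⟨(x, !s), h, by simp⟩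
lemma adm_cases {n : ℤ} (hn : 1 ≤ n) {a b : ℤ} {s t : Bool}
    (ha : a ≤ n - 1) (hb : b ≤ n - 1) (h : adm n (a, s) (b, t)) :
    (s = true ∧ t = true ∧ b = a + 1 ∧ a < 0) ∨
    (s = false ∧ t = false ∧ a = b + 1 ∧ b < 0) ∨
    (s = true ∧ t = false ∧ ((a = n - 1 ∧ b = -1) ∨ (a = -1 ∧ b = n - 1))) := by
  obtain ⟨h1, h2, h3, h4⟩ := h
  simp only [startL, endL, tailV] at h1
  cases s <;> cases t
  · -- false false
    simp only [Bool.false_eq_true, if_false] at h1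
    refine Or.inr (Or.inl ⟨rfl, rfl, ?_, ?_⟩) <;>
    · by_cases hbn : b = n - 1
      · exfalso
        apply h4
        refine ⟨rfl, rfl, show (0:ℤ) ≤ a from ?_, show (0:ℤ) ≤ b from by omega,
          show (b + 1) % n = a from ?_⟩
        · rw [if_pos hbn] at h1; omega
        · rw [if_pos hbn] at h1
          rw [hbn, show n - 1 + 1 = n from by ring, Int.emod_self]
          omega
      · rw [if_neg hbn] at h1
        by_cases hb0 : b < 0
        · omega
        · exfalso
          apply h4
          refine ⟨rfl, rfl, show (0:ℤ) ≤ a from by omega, show (0:ℤ) ≤ b from by omega,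
            show (b + 1) % n = a from ?_⟩
          rw [Int.emod_eq_of_lt (by omega) (by omega)]
          omega
  · -- false true : impossible
    exfalso
    simp only [Bool.false_eq_true, if_false, if_true] at h1
    exact h2 ⟨h1, by simp⟩
  · -- true false
    simp only [Bool.false_eq_true, if_false, if_true] at h1
    refine Or.inr (Or.inr ⟨rfl, rfl, ?_⟩)
    have hab : a ≠ b := fun hab => h2 ⟨hab, by simp⟩
    by_cases han : a = n - 1
    · rw [if_pos han] at h1
      by_cases hbn : b = n - 1
      · exact absurd (han.trans hbn.symm) hab
      · rw [if_neg hbn] at h1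
        exact Or.inl ⟨han, by omega⟩
    · rw [if_neg han] at h1
      by_cases hbn : b = n - 1
      · rw [if_pos hbn] at h1
        exact Or.inr ⟨by omega, hbn⟩
      · rw [if_neg hbn] at h1
        exact absurd (by omega) hab
  · -- true true
    simp only [if_true] at h1
    refine Or.inl ⟨rfl, rfl, ?_, ?_⟩ <;>
    · by_cases han : a = n - 1
      · exfalso
        apply h3
        refine ⟨rfl, rfl, show (0:ℤ) ≤ a from by omega, show (0:ℤ) ≤ b from ?_,
          show (a + 1) % n = b from ?_⟩
        · rw [if_pos han] at h1; omega
        · rw [if_pos han] at h1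
          rw [han, show n - 1 + 1 = n from by ring, Int.emod_self]
          omega
      · rw [if_neg han] at h1
        by_cases ha0 : a < 0
        · omega
        · exfalso
          apply h3
          refine ⟨rfl, rfl, show (0:ℤ) ≤ a from by omega, show (0:ℤ) ≤ b from by omega,
            show (a + 1) % n = b from ?_⟩
          rw [Int.emod_eq_of_lt (by omega) (by omega)]
          omega
lemma struct (n m : ℤ) (hn : 1 ≤ n) (θ : List (ℤ × Bool)) (hθ : IsHomotopyString n m θ) :
    ∃ (a b : ℤ) (k r : ℕ), θ = ascRun a k ++ descRun b r ∧
      (1 ≤ k → 1 ≤ r →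
        ((a + (k : ℤ) - 1 = n - 1 ∧ b = -1) ∨ (a + (k : ℤ) - 1 = -1 ∧ b = n - 1))) := by
  induction θ with
  | nil => exact ⟨0, 0, 0, 0, rfl, by omega⟩
  | cons ℓ θ' ih =>
    obtain ⟨hmem, hch⟩ := hθ
    obtain ⟨a, b, k, r, hθ', hjun⟩ :=
      ih ⟨fun x hx => hmem x (List.mem_cons_of_mem _ hx), hch.tail⟩
    obtain ⟨c, s⟩ := ℓ
    have hcb : -m ≤ c ∧ c ≤ n - 1 := hmem _ (List.mem_cons_self)
    match k, r with
    | 0, 0 =>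
      have hnil : θ' = [] := by simpa [ascRun, descRun] using hθ'
      subst hnil
      cases s
      · exact ⟨0, c, 0, 1, by simp [ascRun, descRun, List.range_succ], by omega⟩
      · exact ⟨c, 0, 1, 0, by simp [ascRun, descRun, List.range_succ], by omega⟩
    | k' + 1, r =>
      rw [ascRun_cons, List.cons_append] at hθ'
      have hhead : (a, true) ∈ θ' := hθ' ▸ List.mem_cons_self
      have hab : -m ≤ a ∧ a ≤ n - 1 := hmem _ (List.mem_cons_of_mem _ hhead)
      have hadm : adm n (c, s) (a, true) := by
        rw [hθ'] at hch
        exact (List.isChain_cons_cons.mp hch).1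
      rcases adm_cases hn hcb.2 hab.2 hadm with ⟨hs, -, hba, hc0⟩ | ⟨-, ht, -, -⟩ | ⟨hs, ht, -⟩
      · subst hs
        subst hba
        refine ⟨c, b, k' + 2, r, ?_, ?_⟩
        · rw [hθ', show k' + 2 = (k' + 1) + 1 from rfl]
          simp only [ascRun_cons, List.cons_append]
        · intro _ hr
          have := hjun (by omega) hr
          push_cast at this ⊢
          omega
      · exact absurd ht (by simp)
      · exact absurd ht (by simp)
    | 0, r' + 1 =>
      rw [descRun_cons] at hθ'
      simp only [ascRun, List.range_zero, List.map_nil, List.nil_append] at hθ'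
      have hhead : (b, false) ∈ θ' := hθ' ▸ List.mem_cons_self
      have habb : -m ≤ b ∧ b ≤ n - 1 := hmem _ (List.mem_cons_of_mem _ hhead)
      have hadm : adm n (c, s) (b, false) := by
        rw [hθ'] at hch
        exact (List.isChain_cons_cons.mp hch).1
      rcases adm_cases hn hcb.2 habb.2 hadm with ⟨-, ht, -, -⟩ | ⟨hs, -, hcb1, hb0⟩ | ⟨hs, -, hj⟩
      · exact absurd ht (by simp)
      · subst hs
        refine ⟨a, c, 0, r' + 2, ?_, by omega⟩
        simp only [ascRun, List.range_zero, List.map_nil, List.nil_append]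
        rw [show r' + 2 = (r' + 1) + 1 from rfl, descRun_cons,
          show c - 1 = b from by omega, descRun_cons, ← hθ']
      · subst hs
        refine ⟨c, b, 1, r' + 1, ?_, ?_⟩
        · rw [hθ', descRun_cons]
          simp [ascRun, List.range_succ]
        · intro _ _
          push_cast
          omega
lemma revStr_append (θ₁ θ₂ : List (ℤ × Bool)) :
    revStr (θ₁ ++ θ₂) = revStr θ₂ ++ revStr θ₁ := by
  simp [revStr]

lemma snd_of_mem_formB {n u : ℤ} {l : ℕ} {ℓ : ℤ × Bool} (h : ℓ ∈ formB n u l) : ℓ.2 = true := by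
  rw [formB_eq_map] at h
  obtain ⟨j, -, rfl⟩ := List.mem_map.mp h
  rfl

lemma mem_formB_self (n u : ℤ) (l : ℕ) : (idx n u, true) ∈ formB n u l := by
  rw [formB_eq_map]
  refine List.mem_map.mpr ⟨0, List.mem_range.mpr (by omega), ?_⟩
  norm_num

lemma formB_ne_nil (n u : ℤ) (l : ℕ) : formB n u l ≠ [] := by
  intro h
  exact absurd (h ▸ mem_formB_self n u l) List.not_mem_nil

lemma revStr_eq_nil_iff {θ : List (ℤ × Bool)} : revStr θ = [] ↔ θ = [] := by
  simp [revStr]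

lemma mem_true_formC (n u : ℤ) (l : ℕ) (v : ℤ) : (idx n u, true) ∈ formC n u l v := by
  rw [formC_eq_append]
  exact List.mem_append_left _ (mem_formB_self n u l)

lemma mem_false_formC (n u : ℤ) (l : ℕ) {v : ℤ} (hv : v ≤ -1) :
    ((-1 : ℤ), false) ∈ formC n u l v := by
  rw [formC_eq_append]
  refine List.mem_append_right _ ?_
  have : ((-1 : ℤ) - ((0 : ℕ) : ℤ), false) ∈ descRun (-1) (-v).toNat :=
    mem_descRun (by omega)
  simpa using this

lemma not_isFormB_nil (n m : ℤ) : ¬ isFormB n m [] := by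
  rintro ⟨u, l, -, -, h | h⟩
  · exact formB_ne_nil n u l h.symm
  · exact formB_ne_nil n u l (revStr_eq_nil_iff.mp h.symm)

lemma not_isFormC_nil (n m : ℤ) : ¬ isFormC n m [] := by
  rintro ⟨u, v, l, -, -, -, hv, -, -, h | h⟩
  · exact absurd (h ▸ mem_true_formC n u l v) List.not_mem_nil
  · have := mem_revStr.mpr (show ((idx n u : ℤ), !false) ∈ formC n u l v from by simpa using mem_true_formC n u l v)
    exact absurd (h ▸ this) List.not_mem_nil

lemma not_isFormC_of_all_true {n m : ℤ} {θ : List (ℤ × Bool)}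
    (h : ∀ ℓ ∈ θ, ℓ.2 = true) : ¬ isFormC n m θ := by
  rintro ⟨u, v, l, -, -, -, hv, -, -, heq | heq⟩
  · have hmem : ((-1 : ℤ), false) ∈ θ := heq ▸ mem_false_formC n u l hv
    simpa using h _ hmem
  · have hmem : (idx n u, false) ∈ θ := by
      rw [heq]
      exact mem_revStr.mpr (show ((idx n u : ℤ), !false) ∈ formC n u l v from by simpa using mem_true_formC n u l v)
    simpa using h _ hmem

lemma not_isFormC_of_all_false {n m : ℤ} {θ : List (ℤ × Bool)}
    (h : ∀ ℓ ∈ θ, ℓ.2 = false) : ¬ isFormC n m θ := by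
  rintro ⟨u, v, l, -, -, -, hv, -, -, heq | heq⟩
  · have hmem : (idx n u, true) ∈ θ := heq ▸ mem_true_formC n u l v
    simpa using h _ hmem
  · have hmem : ((-1 : ℤ), true) ∈ θ := by
      rw [heq]
      exact mem_revStr.mpr (show ((-1 : ℤ), !true) ∈ formC n u l v from by simpa using mem_false_formC n u l hv)
    simpa using h _ hmem

lemma not_isFormB_of_mixed {n m : ℤ} {θ : List (ℤ × Bool)}
    (h1 : ∃ x : ℤ, (x, true) ∈ θ) (h2 : ∃ x : ℤ, (x, false) ∈ θ) : ¬ isFormB n m θ := by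
  rintro ⟨u, l, -, -, heq | heq⟩
  · obtain ⟨x, hx⟩ := h2
    rw [heq] at hx
    simpa using snd_of_mem_formB hx
  · obtain ⟨x, hx⟩ := h1
    rw [heq] at hx
    simpa using snd_of_mem_formB (mem_revStr.mp hx)
/-- Classification of homotopy strings in `Q(n,m)`: up to reversal, every
homotopy string is exactly one of (a) a stationary path (the empty string),
(b) `α_u ⋯ α_{u+l}`, or (c) `α_u ⋯ α_{u+l} ᾱ_{-1} ⋯ ᾱ_v`. -/
theorem stmt19 (n m : ℤ) (hn : 1 ≤ n) (hm : 0 ≤ m)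
    (θ : List (ℤ × Bool)) (hθ : IsHomotopyString n m θ) :
    (θ = [] ∧ ¬isFormB n m θ ∧ ¬isFormC n m θ) ∨
    (θ ≠ [] ∧
      ((isFormB n m θ ∧ ¬isFormC n m θ) ∨ (isFormC n m θ ∧ ¬isFormB n m θ))) := by
  obtain ⟨a, b, k, r, hsplit, hjun⟩ := struct n m hn θ hθ
  obtain ⟨hmem, -⟩ := hθ
  match k, r with
  | 0, 0 =>
    have hnil : θ = [] := by simpa [ascRun, descRun] using hsplit
    exact Or.inl ⟨hnil, hnil ▸ not_isFormB_nil n m, hnil ▸ not_isFormC_nil n m⟩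
  | k' + 1, 0 =>
    have hsp : θ = ascRun a (k' + 1) := by simpa [descRun] using hsplit
    have hbnd : ∀ j : ℕ, j < k' + 1 → -m ≤ a + (j : ℤ) ∧ a + (j : ℤ) ≤ n - 1 :=
      fun j hj => hmem _ (hsp ▸ mem_ascRun hj)
    have ha0 := hbnd 0 (by omega)
    refine Or.inr ⟨by rw [hsp, ascRun_cons]; simp, Or.inl ⟨⟨a, k',
      by simpa using ha0.1, by simpa using ha0.2, Or.inl ?_⟩, ?_⟩⟩
    · rw [hsp, formB_eq_ascRun (fun j hj => by have := (hbnd j hj).2; omega)]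
    · exact not_isFormC_of_all_true (fun ℓ hℓ => snd_of_mem_ascRun (hsp ▸ hℓ))
  | 0, r' + 1 =>
    have hsp : θ = descRun b (r' + 1) := by simpa [ascRun] using hsplit
    have hbnd : ∀ j : ℕ, j < r' + 1 → -m ≤ b - (j : ℤ) ∧ b - (j : ℤ) ≤ n - 1 :=
      fun j hj => hmem _ (hsp ▸ mem_descRun hj)
    have hb0 := hbnd 0 (by omega)
    have hbr := hbnd r' (by omega)
    refine Or.inr ⟨by rw [hsp, descRun_cons]; simp, Or.inl ⟨⟨b - (r' : ℤ), r',
      by omega, by have := hb0.2; omega, Or.inr ?_⟩, ?_⟩⟩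
    · rw [hsp, formB_eq_ascRun (fun j hj => by have := hb0.2; omega), revStr_ascRun]
      congr 1
      push_cast
      ring
    · exact not_isFormC_of_all_false (fun ℓ hℓ => snd_of_mem_descRun (hsp ▸ hℓ))
  | k' + 1, r' + 1 =>
    have hj := hjun (by omega) (by omega)
    have hbndT : ∀ j : ℕ, j < k' + 1 → -m ≤ a + (j : ℤ) ∧ a + (j : ℤ) ≤ n - 1 :=
      fun j hj => hmem _ (hsplit ▸ List.mem_append_left _ (mem_ascRun hj))
    have hbndF : ∀ j : ℕ, j < r' + 1 → -m ≤ b - (j : ℤ) ∧ b - (j : ℤ) ≤ n - 1 :=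
      fun j hj => hmem _ (hsplit ▸ List.mem_append_right _ (mem_descRun hj))
    have ha0 := hbndT 0 (by omega)
    have hbr := hbndF r' (by omega)
    have hne : θ ≠ [] := by rw [hsplit, ascRun_cons]; simp
    have hmix1 : ∃ x : ℤ, (x, true) ∈ θ :=
      ⟨a, hsplit ▸ List.mem_append_left _ (by simpa using mem_ascRun (a := a) (k := k' + 1) (j := 0) (by omega))⟩
    have hmix2 : ∃ x : ℤ, (x, false) ∈ θ :=
      ⟨b, hsplit ▸ List.mem_append_right _ (by simpa using mem_descRun (b := b) (r := r' + 1) (j := 0) (by omega))⟩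
    refine Or.inr ⟨hne, Or.inr ⟨?_, not_isFormB_of_mixed hmix1 hmix2⟩⟩
    rcases hj with ⟨hj1, hj2⟩ | ⟨hj1, hj2⟩
    · -- θ itself is of form (c)
      push_cast at hj1
      have htn : ((-(-(((r' : ℕ) : ℤ) + 1))).toNat) = r' + 1 := by omega
      refine ⟨a, -(((r' : ℕ) : ℤ) + 1), k', by simpa using ha0.1, by simpa using ha0.2,
        by have := hbr.1; omega, by omega, by omega, ?_, Or.inl ?_⟩
      · rw [show a + ((k' : ℕ) : ℤ) = n - 1 from by omega]
      · rw [formC_eq_append, htn,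
          formB_eq_ascRun (fun j hjj => by have := (hbndT j hjj).2; omega), hsplit, hj2]
    · -- θ is the reverse of a string of form (c)
      push_cast at hj1
      have htn : (-a).toNat = k' + 1 := by omega
      refine ⟨n - 1 - (r' : ℤ), a, r', by have := hbr.1; omega, by omega,
        by simpa using ha0.1, by omega, by omega, ?_, Or.inr ?_⟩
      · rw [show n - 1 - ((r' : ℕ) : ℤ) + ((r' : ℕ) : ℤ) = n - 1 from by ring]
      · rw [formC_eq_append, htn,
          formB_eq_ascRun (fun j hjj => by
            have hjj' := List.mem_range.mp (List.mem_range.mpr hjj)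
            omega),
          revStr_append, revStr_descRun, revStr_ascRun, hsplit]
      
        congr 1
        · congr 1
          push_cast
          omega
        · congr 1
          push_cast
          omega
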